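/- Fix d ∈ ℕ, p ∈ (0,∞), a metric space (M, d_M), and a sequence of connected d-regular graphs G_n = (V_n, E_n) with |V_n| → ∞ and sup_n γ(A_{G_n}, d_M^p) < ∞. Then there do not exist moduli ω, Ω : [0,∞) → [0,∞) with ω ≤ Ω pointwise and lim_{t→∞} ω(t) = ∞, together with maps f_n : V_n → M satisfying ω(d_{G_n}(x,y)) ≤ d_M(f_n(x), f_n(y)) ≤ Ω(d_{G_n}(x,y)) for all x,y ∈ V_n and all n. In other words, the family {(G_n, d_{G_n})} does not embed equi-coarsely into M. -/

import Mathlib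

open Filter

open Finset SimpleGraph in
lemma ball_card_le_aux {V : Type*} [Fintype V] [DecidableEq V]
    (G : SimpleGraph V) (d : ℕ) [DecidableRel G.Adj]
    (hreg : G.IsRegularOfDegree d) (hconn : G.Connected) (u : V) :
    ∀ r : ℕ, (univ.filter fun v => G.dist u v ≤ r).card ≤ (d + 1) ^ r := by
  intro r
  induction r with
  | zero =>
    have hsub : (univ.filter fun v => G.dist u v ≤ 0) ⊆ {u} := by
      intro v hv
      simp only [mem_filter, mem_univ, true_and, Nat.le_zero] at hv
      have := (hconn.dist_eq_zero_iff (u := u) (v := v)).mp hv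
      simp [this]
    simpa using (card_le_card hsub).trans (by simp)
  | succ r ih =>
    set A := (univ.filter fun v => G.dist u v ≤ r) with hA
    have hsub : (univ.filter fun v => G.dist u v ≤ r + 1) ⊆
        A ∪ A.biUnion (fun w => G.neighborFinset w) := by
      intro v hv
      simp only [mem_filter, mem_univ, true_and] at hv
      rcases Nat.lt_or_ge (G.dist u v) (r + 1) with h | h
      · exact mem_union_left _ (by simp [hA, Nat.lt_succ_iff.mp h])
      · have hd : G.dist u v = r + 1 := le_antisymm hv h
        have hne : v ≠ u := by
          intro h'; subst h'; simp [SimpleGraph.dist_self] at hd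
        obtain ⟨w, hadj, q, hq⟩ := SimpleGraph.Walk.exists_eq_cons_of_ne hne
          (((hconn u v).exists_walk_length_eq_dist).choose.reverse)
        have hlen : q.length = r := by
          have h1 := ((hconn u v).exists_walk_length_eq_dist).choose_spec
          have h2 : (((hconn u v).exists_walk_length_eq_dist).choose.reverse).length
              = r + 1 := by rw [SimpleGraph.Walk.length_reverse, h1, hd]
          rw [hq] at h2
          simpa using h2
        refine mem_union_right _ (mem_biUnion.mpr ⟨w, ?_, ?_⟩)
        · simp only [hA, mem_filter, mem_univ, true_and]
          calc G.dist u w = G.dist w u := SimpleGraph.dist_comm ..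
            _ ≤ q.length := SimpleGraph.dist_le q
            _ = r := hlen
        · exact (SimpleGraph.mem_neighborFinset ..).mpr hadj.symm
    calc (univ.filter fun v => G.dist u v ≤ r + 1).card
        ≤ (A ∪ A.biUnion (fun w => G.neighborFinset w)).card := card_le_card hsub
      _ ≤ A.card + (A.biUnion (fun w => G.neighborFinset w)).card := card_union_le _ _
      _ ≤ A.card + ∑ w ∈ A, (G.neighborFinset w).card := by
          gcongr; exact card_biUnion_le
      _ = A.card + A.card * d := by
          simp only [SimpleGraph.card_neighborFinset_eq_degree]
          rw [Finset.sum_congr rfl fun w _ => hreg w, Finset.sum_const, smul_eq_mul]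
      _ ≤ (d + 1) ^ r + (d + 1) ^ r * d := by gcongr
      _ = (d + 1) ^ (r + 1) := by ring


/-- Gromov's observation: a sequence of connected d-regular graphs with
uniformly bounded nonlinear spectral gaps with respect to (M, d_M^p) does not
embed equi-coarsely into M. -/
theorem expanders_no_equicoarse_embedding {M : Type*} [MetricSpace M]
    (d : ℕ) (p : ℝ) (hp : 0 < p)
    (m : ℕ → ℕ) (hm : Tendsto m atTop atTop)
    (G : ∀ k, SimpleGraph (Fin (m k))) [∀ k, DecidableRel (G k).Adj]
    (hconn : ∀ k, (G k).Connected)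
    (hreg : ∀ k, (G k).IsRegularOfDegree d)
    (γ : ℝ)
    (hγ : ∀ k, ∀ x : Fin (m k) → M,
      (1 / (m k : ℝ) ^ 2) * (∑ u, ∑ v, dist (x u) (x v) ^ p) ≤
        γ * ((1 / ((d : ℝ) * m k)) *
          ∑ u, ∑ v, if (G k).Adj u v then dist (x u) (x v) ^ p else 0)) :
    ¬ ∃ (ω Ω : ℝ → ℝ) (f : ∀ k, Fin (m k) → M),
        (∀ t, ω t ≤ Ω t) ∧ Tendsto ω atTop atTop ∧
        ∀ k, ∀ x y : Fin (m k),
          ω ((G k).dist x y : ℝ) ≤ dist (f k x) (f k y) ∧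
            dist (f k x) (f k y) ≤ Ω ((G k).dist x y : ℝ) := by
  rintro ⟨ω, Ω, f, hωΩ, hω, hf⟩
  -- an auxiliary graph with at least two vertices
  obtain ⟨k0, hk0⟩ := (hm.eventually_ge_atTop 2).exists
  have hu0 : (0 : ℕ) < m k0 := by omega
  have hv0 : (1 : ℕ) < m k0 := by omega
  set u0 : Fin (m k0) := ⟨0, hu0⟩
  set v0 : Fin (m k0) := ⟨1, hv0⟩
  have hne0 : u0 ≠ v0 := by simp [u0, v0, Fin.ext_iff]
  -- u0 has a neighbor
  have hdist0 : (G k0).dist u0 v0 ≠ 0 := by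
    exact fun h => hne0 ((hconn k0).dist_eq_zero_iff.mp h)
  obtain ⟨w0, hadj0, -, -⟩ := SimpleGraph.Walk.exists_eq_cons_of_ne hne0
    (((hconn k0) u0 v0).exists_walk_length_eq_dist).choose
  -- hence d ≥ 1
  have hd1 : 1 ≤ d := by
    have : 0 < (G k0).degree u0 := by
      rw [← SimpleGraph.card_neighborFinset_eq_degree]
      exact Finset.card_pos.mpr ⟨w0, (SimpleGraph.mem_neighborFinset ..).mpr hadj0⟩
    rw [hreg k0 u0] at this
    omega
  -- Ω 1 is nonnegative
  have hΩ1 : 0 ≤ Ω 1 := by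
    have h1 : (G k0).dist u0 w0 = 1 := SimpleGraph.dist_eq_one_iff_adj.mpr hadj0
    have := (hf k0 u0 w0).2
    rw [h1] at this
    exact le_trans dist_nonneg (by exact_mod_cast this)
  set C : ℝ := max γ 0 with hC
  have hC0 : 0 ≤ C := le_max_right _ _
  have hγC : γ ≤ C := le_max_left _ _
  set Ω1p : ℝ := Ω 1 ^ p with hΩ1p
  have hΩ1p0 : 0 ≤ Ω1p := Real.rpow_nonneg hΩ1 p
  set B : ℝ := (2 * C * Ω1p + 1) ^ p⁻¹ with hB
  have hB0 : 0 ≤ B := Real.rpow_nonneg (by positivity) _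
  have hBp : B ^ p = 2 * C * Ω1p + 1 :=
    Real.rpow_inv_rpow (by positivity) hp.ne'
  -- threshold for ω
  obtain ⟨T, hT⟩ := (Filter.eventually_atTop).mp (hω.eventually_ge_atTop B)
  set r : ℕ := ⌈T⌉₊ with hr
  -- choose a large graph
  obtain ⟨k, hk⟩ := (hm.eventually_ge_atTop (2 * (d + 1) ^ r)).exists
  set N : ℕ := m k with hN
  have hNpos : 0 < N := by
    have : 0 < (d + 1) ^ r := Nat.pow_pos (by omega)
    omega
  have hNR : (0 : ℝ) < N := by exact_mod_cast hNpos
  -- upper bound on the edge sum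
  set E : ℝ := ∑ u, ∑ v, if (G k).Adj u v then dist (f k u) (f k v) ^ p else 0 with hE
  have hE0 : 0 ≤ E := by
    apply Finset.sum_nonneg; intro u _
    apply Finset.sum_nonneg; intro v _
    split
    · exact Real.rpow_nonneg dist_nonneg p
    · exact le_refl 0
  have hEle : E ≤ (d : ℝ) * N * Ω1p := by
    have h1 : E ≤ ∑ u : Fin (m k), ∑ v : Fin (m k),
        (if (G k).Adj u v then Ω1p else 0) := by
      apply Finset.sum_le_sum; intro u _
      apply Finset.sum_le_sum; intro v _
      split
      · rename_i hadj
        have h1 : (G k).dist u v = 1 := SimpleGraph.dist_eq_one_iff_adj.mpr hadj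
        have h2 := (hf k u v).2
        rw [h1] at h2
        exact Real.rpow_le_rpow dist_nonneg (by exact_mod_cast h2) hp.le
      · exact le_refl 0
    have h2 : ∀ u : Fin (m k), ∑ v : Fin (m k),
        (if (G k).Adj u v then Ω1p else 0) = (d : ℝ) * Ω1p := by
      intro u
      rw [← Finset.sum_filter, Finset.sum_const, ← SimpleGraph.neighborFinset_eq_filter]
      rw [show ((G k).neighborFinset u).card = d from hreg k u]
      simp [nsmul_eq_mul]
    rw [Finset.sum_congr rfl (fun u _ => h2 u), Finset.sum_const] at h1
    simpa [Finset.card_univ, mul_assoc, mul_comm, mul_left_comm] using h1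
  -- lower bound on the full sum
  set S : ℝ := ∑ u, ∑ v, dist (f k u) (f k v) ^ p with hS
  have hSge : (N : ℝ) * ((N : ℝ) / 2 * B ^ p) ≤ S := by
    have key : ∀ u : Fin (m k), (N : ℝ) / 2 * B ^ p ≤
        ∑ v, dist (f k u) (f k v) ^ p := by
      intro u
      have hsum : ∑ v : Fin (m k), (if ¬ (G k).dist u v ≤ r then B ^ p else 0) ≤
          ∑ v, dist (f k u) (f k v) ^ p := by
        apply Finset.sum_le_sum; intro v _
        split
        · rename_i hfar
          push_neg at hfar
          have h1 : T ≤ ((G k).dist u v : ℝ) := by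
            calc T ≤ (r : ℝ) := Nat.le_ceil T
              _ ≤ ((G k).dist u v : ℝ) := by exact_mod_cast hfar.le
          have h2 := hT _ h1
          have h3 := (hf k u v).1
          exact Real.rpow_le_rpow hB0 (le_trans h2 h3) hp.le
        · exact Real.rpow_nonneg dist_nonneg p
      have hcard : N ≤ 2 * (Finset.univ.filter
          fun v : Fin (m k) => ¬ (G k).dist u v ≤ r).card := by
        have hb := ball_card_le_aux (G k) d (hreg k) (hconn k) u r
        have hsplit := Finset.card_filter_add_card_filter_not
          (s := (Finset.univ : Finset (Fin (m k))))
          (p := fun v => (G k).dist u v ≤ r)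
        rw [Finset.card_univ, Fintype.card_fin] at hsplit
        omega
      calc (N : ℝ) / 2 * B ^ p
          ≤ ((Finset.univ.filter
              fun v : Fin (m k) => ¬ (G k).dist u v ≤ r).card : ℝ) * B ^ p := by
            apply mul_le_mul_of_nonneg_right _ (Real.rpow_nonneg hB0 p)
            rw [div_le_iff₀ (by norm_num : (0:ℝ) < 2)]
            have h' : N ≤ (Finset.univ.filter
                fun v : Fin (m k) => ¬ (G k).dist u v ≤ r).card * 2 := by omega
            exact_mod_cast h'
        _ = ∑ v : Fin (m k), (if ¬ (G k).dist u v ≤ r then B ^ p else 0) := by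
            rw [← Finset.sum_filter, Finset.sum_const, nsmul_eq_mul]
        _ ≤ _ := hsum
    calc (N : ℝ) * ((N : ℝ) / 2 * B ^ p)
        = ∑ _u : Fin (m k), ((N : ℝ) / 2 * B ^ p) := by
          rw [Finset.sum_const, Finset.card_univ, Fintype.card_fin, nsmul_eq_mul]
      _ ≤ S := Finset.sum_le_sum fun u _ => key u
  -- combine
  have hmain := hγ k (f k)
  rw [← hE, ← hS] at hmain
  have hdN : (0 : ℝ) < (d : ℝ) * N := by
    have : (1 : ℝ) ≤ (d : ℝ) := by exact_mod_cast hd1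
    positivity
  have hup : γ * (1 / ((d : ℝ) * N) * E) ≤ C * Ω1p := by
    have h1 : 0 ≤ 1 / ((d : ℝ) * N) * E := by positivity
    have h2 : 1 / ((d : ℝ) * N) * E ≤ Ω1p := by
      rw [div_mul_eq_mul_div, one_mul, div_le_iff₀ hdN]
      calc E ≤ (d : ℝ) * N * Ω1p := hEle
        _ = Ω1p * ((d : ℝ) * N) := by ring
    calc γ * (1 / ((d : ℝ) * N) * E) ≤ C * (1 / ((d : ℝ) * N) * E) :=
          mul_le_mul_of_nonneg_right hγC h1
      _ ≤ C * Ω1p := mul_le_mul_of_nonneg_left h2 hC0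
  have hlow : B ^ p / 2 ≤ 1 / (N : ℝ) ^ 2 * S := by
    have hpos : (0 : ℝ) < 1 / (N : ℝ) ^ 2 := by positivity
    calc B ^ p / 2 = 1 / (N : ℝ) ^ 2 * ((N : ℝ) * ((N : ℝ) / 2 * B ^ p)) := by
          field_simp
      _ ≤ 1 / (N : ℝ) ^ 2 * S := mul_le_mul_of_nonneg_left hSge hpos.le
  have : B ^ p / 2 ≤ C * Ω1p := le_trans hlow (le_trans hmain hup)
  rw [hBp] at this
  linarith
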